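/- arXiv:2005.05575 — 2 statements merged into one kernel-verified Lean document; each statement's English description precedes it below -/
import Mathlib

section
/- Let Z = (Z_n)_{n=0,...,N} be a strictly positive adapted integrable process, and let H ≥ 0 be an F_N-measurable random variable with H·Z_N integrable. Define π_n := Z_n^{-1} E[H Z_N | F_n] (the real-world pricing formula). Then the process (π_n Z_n)_{n=0,...,N} is a martingale, π_N = H almost surely, and for any nonnegative process V with (V_n Z_n) a supermartingale and V_N = H almost surely, one has π_n ≤ V_n almost surely for all n. -/
open MeasureTheory Filter

variable {Ω : Type*} {m0 : MeasurableSpace Ω}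

/-- Real-world pricing formula in discrete time: with a strictly positive deflator `Z` and a
nonnegative claim `H` with `H * Z N` integrable, the price process
`π n = (Z n)⁻¹ * E[H * Z N | ℱ n]` satisfies: `π * Z` is a martingale, `π N = H` a.s., and `π`
is a lower bound for every nonnegative process `V` with `V * Z` a supermartingale and
`V N = H` a.s. -/
theorem real_world_pricing_formula
    (ℱ : Filtration ℕ m0) (μ : Measure Ω) [IsProbabilityMeasure μ] (N : ℕ)
    (Z : ℕ → Ω → ℝ) (H : Ω → ℝ)
    (hZ_adapted : Adapted ℱ Z) (hZ_int : ∀ n, Integrable (Z n) μ)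
    (hZ_pos : ∀ n ω, 0 < Z n ω)
    (hH_meas : StronglyMeasurable[ℱ N] H) (hH_nonneg : ∀ ω, 0 ≤ H ω)
    (hHZ_int : Integrable (fun ω => H ω * Z N ω) μ)
    (π : ℕ → Ω → ℝ)
    (hπ : ∀ n ω, π n ω = (Z n ω)⁻¹ * (μ[fun ω' => H ω' * Z N ω'|ℱ n]) ω) :
    (∀ n < N, μ[fun ω => π (n + 1) ω * Z (n + 1) ω|ℱ n] =ᵐ[μ] fun ω => π n ω * Z n ω) ∧
    π N =ᵐ[μ] H ∧
    ∀ V : ℕ → Ω → ℝ, (∀ n ω, 0 ≤ V n ω) →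
      (∀ n, Integrable (fun ω => V n ω * Z n ω) μ) →
      (∀ n < N, μ[fun ω => V (n + 1) ω * Z (n + 1) ω|ℱ n] ≤ᵐ[μ] fun ω => V n ω * Z n ω) →
      V N =ᵐ[μ] H →
      ∀ n ≤ N, π n ≤ᵐ[μ] V n := by
  have hπZ : ∀ k, (fun ω => π k ω * Z k ω) = μ[fun ω' => H ω' * Z N ω'|ℱ k] := by
    intro k
    funext ω
    rw [hπ, mul_comm, ← mul_assoc, mul_inv_cancel₀ (hZ_pos k ω).ne', one_mul]
  have hmart : ∀ n < N,
      μ[fun ω => π (n + 1) ω * Z (n + 1) ω|ℱ n] =ᵐ[μ] fun ω => π n ω * Z n ω := by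
    intro n _
    rw [hπZ (n + 1), hπZ n]
    exact condExp_condExp_of_le (ℱ.mono (Nat.le_succ n)) (ℱ.le (n + 1))
  have hceqN : μ[fun ω' => H ω' * Z N ω'|ℱ N] = fun ω' => H ω' * Z N ω' :=
    condExp_of_stronglyMeasurable (ℱ.le N) (hH_meas.mul (hZ_adapted N).stronglyMeasurable) hHZ_int
  have hterm : π N =ᵐ[μ] H := by
    refine Eventually.of_forall fun ω => ?_
    rw [hπ, hceqN]
    show (Z N ω)⁻¹ * (H ω * Z N ω) = H ω
    rw [mul_comm (H ω), ← mul_assoc, inv_mul_cancel₀ (hZ_pos N ω).ne', one_mul]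
  refine ⟨hmart, hterm, ?_⟩
  intro V hV_nonneg hVZ_int hVZ_super hVN
  have key : ∀ k n, n + k = N → π n ≤ᵐ[μ] V n := by
    intro k
    induction k with
    | zero =>
      intro n hn
      simp only [Nat.add_zero] at hn
      subst hn
      exact hterm.le.trans (hVN.symm.le)
    | succ k ih =>
      intro n hn
      have hnN : n < N := by omega
      have ih' : π (n + 1) ≤ᵐ[μ] V (n + 1) := ih (n + 1) (by omega)
      have hle : (fun ω => π (n + 1) ω * Z (n + 1) ω) ≤ᵐ[μ]
          fun ω => V (n + 1) ω * Z (n + 1) ω := by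
        filter_upwards [ih'] with ω hω
        exact mul_le_mul_of_nonneg_right hω (hZ_pos (n + 1) ω).le
      have hπZ_int : Integrable (fun ω => π (n + 1) ω * Z (n + 1) ω) μ := by
        rw [hπZ (n + 1)]; exact integrable_condExp
      have h1 : μ[fun ω => π (n + 1) ω * Z (n + 1) ω|ℱ n] ≤ᵐ[μ]
          μ[fun ω => V (n + 1) ω * Z (n + 1) ω|ℱ n] :=
        condExp_mono hπZ_int (hVZ_int (n + 1)) hle
      have h2 : (fun ω => π n ω * Z n ω) ≤ᵐ[μ] fun ω => V n ω * Z n ω := by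
        refine ((hmart n hnN).symm.le.trans h1).trans (hVZ_super n hnN)
      filter_upwards [h2] with ω hω
      exact le_of_mul_le_mul_right hω (hZ_pos n ω)
  intro n hn
  exact key (N - n) n (by omega)
end

section
/- Suppose there exists a strictly positive process Z = (Z_n)_{n=0,...,N} such that for every nonnegative self-financing portfolio value process V with V_0 = 1 the deflated process (V_n Z_n) is a supermartingale. Then the set of terminal values {V_N : V nonnegative self-financing portfolio, V_0 = 1} is bounded in probability; i.e., for every ε > 0 there exists K > 0 such that P(V_N > K) < ε uniformly over all such portfolios. (Existence of a deflator implies No Unbounded Profit with Bounded Risk.) -/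
open MeasureTheory Filter

variable {Ω : Type*} {m0 : MeasurableSpace Ω}

/-- Existence of a deflator implies NUPBR in discrete time: if `Z` is strictly positive with
constant initial value and every nonnegative self-financing portfolio `V` with `V 0 = 1`
deflates to a supermartingale `V * Z`, then the terminal values `V N` of such portfolios are
bounded in probability. -/
theorem deflator_implies_nupbr
    (ℱ : Filtration ℕ m0) (μ : Measure Ω) [IsProbabilityMeasure μ] (N d : ℕ)
    (S : ℕ → Ω → Fin d → ℝ) (hS_nonneg : ∀ n ω i, 0 ≤ S n ω i)
    (Z : ℕ → Ω → ℝ) (hZ_adapted : StronglyAdapted ℱ Z)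
    (hZ_pos : ∀ n ω, 0 < Z n ω)
    (z0 : ℝ) (hz0 : 0 < z0) (hZ0 : ∀ ω, Z 0 ω = z0)
    (hsuper : ∀ (δ : ℕ → Ω → Fin d → ℝ) (V : ℕ → Ω → ℝ),
      (∀ n, StronglyMeasurable[ℱ n] (δ (n + 1))) →
      (∀ n ω, V n ω =
        1 + ∑ k ∈ Finset.range n, ∑ i, δ (k + 1) ω i * (S (k + 1) ω i - S k ω i)) →
      (∀ n ω, 0 ≤ V n ω) →
      (∀ n, Integrable (fun ω => V n ω * Z n ω) μ) ∧
      (∀ n, μ[fun ω => V (n + 1) ω * Z (n + 1) ω|ℱ n] ≤ᵐ[μ] fun ω => V n ω * Z n ω)) :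
    ∀ ε : ℝ, 0 < ε → ∃ K : ℝ, 0 < K ∧
      ∀ (δ : ℕ → Ω → Fin d → ℝ) (V : ℕ → Ω → ℝ),
        (∀ n, StronglyMeasurable[ℱ n] (δ (n + 1))) →
        (∀ n ω, V n ω =
          1 + ∑ k ∈ Finset.range n, ∑ i, δ (k + 1) ω i * (S (k + 1) ω i - S k ω i)) →
        (∀ n ω, 0 ≤ V n ω) →
        μ {ω | K < V N ω} < ENNReal.ofReal ε := by
  intro ε hε
  -- Z N is measurable
  have hZN_meas : Measurable (Z N) :=
    ((hZ_adapted N).measurable).mono (ℱ.le N) le_rfl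
  -- choose η > 0 with μ {Z N < η} < ε/2
  have hiInter : (⋂ n : ℕ, {ω | Z N ω < 1 / (n + 1)}) = ∅ := by
    ext ω
    simp only [Set.mem_iInter, Set.mem_setOf_eq, Set.mem_empty_iff_false, iff_false, not_forall,
      not_lt]
    obtain ⟨n, hn⟩ := exists_nat_one_div_lt (hZ_pos N ω)
    exact ⟨n, hn.le⟩
  have htend : Tendsto (fun n : ℕ => μ {ω | Z N ω < 1 / (n + 1)}) atTop (nhds 0) := by
    have := tendsto_measure_iInter_atTop (μ := μ)
      (s := fun n : ℕ => {ω | Z N ω < 1 / (n + 1)})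
      (fun n => (hZN_meas measurableSet_Iio).nullMeasurableSet)
      (fun a b hab => by
        intro ω hω
        simp only [Set.mem_setOf_eq] at hω ⊢
        refine hω.trans_le ?_
        gcongr)
      ⟨0, measure_ne_top μ _⟩
    rwa [hiInter, measure_empty] at this
  have hhalf : (0 : ENNReal) < ENNReal.ofReal (ε / 2) := by
    simp [ENNReal.ofReal_pos]; linarith
  obtain ⟨n, hn⟩ := (htend.eventually (gt_mem_nhds hhalf)).exists
  set η : ℝ := 1 / (n + 1) with hη_def
  have hη : 0 < η := by positivity
  -- choose K
  set K : ℝ := 2 * z0 / (ε * η) + 1 with hK_def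
  have hK0 : 0 < K := by positivity
  refine ⟨K, hK0, ?_⟩
  intro δ V hδ hV hVpos
  obtain ⟨hint, hcond⟩ := hsuper δ V hδ hV hVpos
  -- E[V n Z n] ≤ z0
  have hExp : ∀ m : ℕ, ∫ ω, V m ω * Z m ω ∂μ ≤ z0 := by
    intro m
    induction m with
    | zero =>
        have : ∀ ω, V 0 ω * Z 0 ω = z0 := by
          intro ω
          rw [hV 0 ω, hZ0 ω]; simp
        simp only [this]
        simp
    | succ m ih =>
        calc ∫ ω, V (m + 1) ω * Z (m + 1) ω ∂μ
            = ∫ ω, (μ[fun ω => V (m + 1) ω * Z (m + 1) ω|ℱ m]) ω ∂μ :=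
              (integral_condExp (ℱ.le m)).symm
          _ ≤ ∫ ω, V m ω * Z m ω ∂μ :=
              integral_mono_ae integrable_condExp (hint m) (hcond m)
          _ ≤ z0 := ih
  -- Markov on V N * Z N at level K * η
  have hmarkov : K * η * (μ {ω | K * η ≤ V N ω * Z N ω}).toReal ≤ z0 := by
    refine le_trans (mul_meas_ge_le_integral_of_nonneg ?_ (hint N) (K * η)) (hExp N)
    exact Filter.Eventually.of_forall fun ω => mul_nonneg (hVpos N ω) (hZ_pos N ω).le
  have hmeasfin : μ {ω | K * η ≤ V N ω * Z N ω} ≠ ⊤ := measure_ne_top μ _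
  have hmarkov' : μ {ω | K * η ≤ V N ω * Z N ω} ≤ ENNReal.ofReal (z0 / (K * η)) := by
    rw [← ENNReal.ofReal_toReal hmeasfin]
    apply ENNReal.ofReal_le_ofReal
    rw [div_eq_inv_mul, ← mul_le_mul_iff_right₀ (show (0:ℝ) < K * η by positivity)]
    calc K * η * (μ {ω | K * η ≤ V N ω * Z N ω}).toReal ≤ z0 := hmarkov
      _ = K * η * ((K * η)⁻¹ * z0) := by field_simp
  -- the inclusion
  have hincl : {ω | K < V N ω} ⊆ {ω | Z N ω < η} ∪ {ω | K * η ≤ V N ω * Z N ω} := by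
    intro ω hω
    simp only [Set.mem_setOf_eq] at hω
    by_cases hZη : Z N ω < η
    · exact Or.inl hZη
    · right
      push_neg at hZη
      have : K * η ≤ V N ω * Z N ω := by
        calc K * η ≤ V N ω * η := by nlinarith
          _ ≤ V N ω * Z N ω := by nlinarith [hVpos N ω]
      exact this
  calc μ {ω | K < V N ω} ≤ μ ({ω | Z N ω < η} ∪ {ω | K * η ≤ V N ω * Z N ω}) :=
        measure_mono hincl
    _ ≤ μ {ω | Z N ω < η} + μ {ω | K * η ≤ V N ω * Z N ω} := measure_union_le _ _
    _ < ENNReal.ofReal (ε / 2) + ENNReal.ofReal (ε / 2) := by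
        apply ENNReal.add_lt_add_of_lt_of_le (by simp) hn
        · calc μ {ω | K * η ≤ V N ω * Z N ω} ≤ ENNReal.ofReal (z0 / (K * η)) := hmarkov'
            _ ≤ ENNReal.ofReal (ε / 2) := by
                apply ENNReal.ofReal_le_ofReal
                rw [div_le_iff₀ (by positivity)]
                have hKη : 2 * z0 / ε ≤ K * η := by
                  have : K * η = 2 * z0 / ε + η := by
                    rw [hK_def]; field_simp
                  linarith
                calc z0 = ε / 2 * (2 * z0 / ε) := by field_simp
                  _ ≤ ε / 2 * (K * η) := by
                      apply mul_le_mul_of_nonneg_left hKη (by positivity)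
    _ = ENNReal.ofReal ε := by
        rw [← ENNReal.ofReal_add (by positivity) (by positivity)]
        norm_num
end
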